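/- Coupling Theorem for the Reversible Michaelis–Menten network: for every finite sequence of update parameters (i₁,t₁),…,(i_n,t_n) with all t_j > 0, if the coupled flow Φ_n = U_{i_n,t_n} ∘ ⋯ ∘ U_{i₁,t₁} satisfies Φ_n(0,0) = Φ_n(0,N) = z, then Φ_n(y) = z for every starting state y ∈ S; that is, coupling of the trajectories started from the two corner states (0,0) and (0,N) implies coupling of the trajectories started from all states of S. -/

import Mathlib

/-- The RMM state space `S = {(x_C, x_P) : 0 ≤ x_C ≤ M, 0 ≤ x_P, x_C + x_P ≤ N}`. -/
def RMMState (N M : ℕ) : Set (ℤ × ℤ) :=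
  {x | 0 ≤ x.1 ∧ x.1 ≤ (M : ℤ) ∧ 0 ≤ x.2 ∧ x.1 + x.2 ≤ (N : ℤ)}

/-- The reaction rates `λ₁, λ₂, λ₃, λ₄` (indexed by `Fin 4`, so reaction `Rᵢ` has index `i-1`). -/
noncomputable def RMMrate (k₁ k₂ k₃ k₄ : ℝ) (N M : ℕ) (i : Fin 4) (x : ℤ × ℤ) : ℝ :=
  match i with
  | 0 => k₁ * ((N : ℝ) - (x.1 : ℝ) - (x.2 : ℝ)) * ((M : ℝ) - (x.1 : ℝ))
  | 1 => k₂ * (x.1 : ℝ)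
  | 2 => k₃ * (x.1 : ℝ)
  | 3 => k₄ * (x.2 : ℝ) * ((M : ℝ) - (x.1 : ℝ))

/-- The reaction displacements `R₁ = (1,0)`, `R₂ = (-1,0)`, `R₃ = (-1,1)`, `R₄ = (1,-1)`. -/
def RMMdisp : Fin 4 → ℤ × ℤ
  | 0 => (1, 0)
  | 1 => (-1, 0)
  | 2 => (-1, 1)
  | 3 => (1, -1)

/-- The coupled one-step update `U_{i,t}`: move by `Rᵢ` if `λᵢ(x) ≥ t`, stay put otherwise. -/
noncomputable def RMMupdate (k₁ k₂ k₃ k₄ : ℝ) (N M : ℕ) (i : Fin 4) (t : ℝ)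
    (x : ℤ × ℤ) : ℤ × ℤ :=
  if RMMrate k₁ k₂ k₃ k₄ N M i x ≥ t then x + RMMdisp i else x

/-- Claim-A exclusion region `ψ_A(c,p)`. -/
def psiA (c p : ℤ) : Set (ℤ × ℤ) :=
  {x | x.2 < p} ∪ {x | x.1 < c ∧ x.1 + x.2 ≤ c + p}

/-- Claim-B exclusion region `ψ_B(c,p)`. -/
def psiB (c p : ℤ) : Set (ℤ × ℤ) :=
  {x | x.2 > p} ∪ {x | x.1 > c ∧ x.1 + x.2 > c + p}

/-- The coupled flow: composition of the one-step updates along a list of parameters. -/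
noncomputable def RMMflow (k₁ k₂ k₃ k₄ : ℝ) (N M : ℕ) (L : List (Fin 4 × ℝ))
    (x : ℤ × ℤ) : ℤ × ℤ :=
  L.foldl (fun y q => RMMupdate k₁ k₂ k₃ k₄ N M q.1 q.2 y) x

/-- Coupling Theorem: if the trajectories started from the corner states `(0,0)` and `(0,N)`
have coupled, then the trajectories started from all states of `S` have coupled. -/
def RMMRel (u v : ℤ × ℤ) : Prop := u.2 ≤ v.2 ∧ u.1 + u.2 ≤ v.1 + v.2

lemma RMM_mem_step (k₁ k₂ k₃ k₄ : ℝ)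
    (hk₁ : 0 < k₁) (hk₂ : 0 < k₂) (hk₃ : 0 < k₃) (hk₄ : 0 < k₄)
    (N M : ℕ) (i : Fin 4) (t : ℝ) (ht : 0 < t) (y : ℤ × ℤ) (hy : y ∈ RMMState N M) :
    RMMupdate k₁ k₂ k₃ k₄ N M i t y ∈ RMMState N M := by
  obtain ⟨h1, h2, h3, h4⟩ := hy
  have h2' : (y.1 : ℝ) ≤ M := by exact_mod_cast h2
  have h4' : (y.1 : ℝ) + y.2 ≤ N := by exact_mod_cast h4
  have h1' : (0 : ℝ) ≤ y.1 := by exact_mod_cast h1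
  have h3' : (0 : ℝ) ≤ y.2 := by exact_mod_cast h3
  fin_cases i <;>
    simp only [RMMupdate, RMMrate, RMMdisp] <;>
    split_ifs with h <;> simp only [h, if_true, if_false] <;>
    simp only [RMMState, Set.mem_setOf_eq, Prod.fst_add, Prod.snd_add] <;>
    [skip; exact ⟨h1, h2, h3, h4⟩; skip; exact ⟨h1, h2, h3, h4⟩;
     skip; exact ⟨h1, h2, h3, h4⟩; skip; exact ⟨h1, h2, h3, h4⟩]
  · -- reaction 1 fired
    have f2 : (0:ℝ) ≤ (M:ℝ) - y.1 := by linarith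
    have f1 : (0:ℝ) ≤ (N:ℝ) - y.1 - y.2 := by linarith
    have hs : (y.1 : ℝ) + y.2 < N := by nlinarith [mul_nonneg hk₁.le f2, mul_nonneg hk₁.le f1]
    have hc : (y.1 : ℝ) < M := by nlinarith [mul_nonneg hk₁.le f2, mul_nonneg hk₁.le f1, mul_nonneg (mul_nonneg hk₁.le f1) f2]
    have hs' : y.1 + y.2 < (N : ℤ) := by exact_mod_cast hs
    have hc' : y.1 < (M : ℤ) := by exact_mod_cast hc
    refine ⟨by omega, by omega, by omega, by omega⟩
  · -- reaction 2 fired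
    have : (0 : ℝ) < y.1 := by nlinarith [mul_nonneg hk₂.le h1']
    have hy1 : 0 < y.1 := by exact_mod_cast this
    refine ⟨by omega, by omega, by omega, by omega⟩
  · -- reaction 3 fired
    have : (0 : ℝ) < y.1 := by nlinarith [mul_nonneg hk₃.le h1']
    have hy1 : 0 < y.1 := by exact_mod_cast this
    refine ⟨by omega, by omega, by omega, by omega⟩
  · -- reaction 4 fired
    have f2 : (0:ℝ) ≤ (M:ℝ) - y.1 := by linarith
    have hp : (0 : ℝ) < y.2 := by nlinarith [mul_nonneg hk₄.le f2, mul_nonneg (mul_nonneg hk₄.le h3') f2]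
    have hc : (y.1 : ℝ) < M := by nlinarith [mul_nonneg hk₄.le h3', mul_nonneg (mul_nonneg hk₄.le h3') f2]
    have hp' : 0 < y.2 := by exact_mod_cast hp
    have hc' : y.1 < (M : ℤ) := by exact_mod_cast hc
    refine ⟨by omega, by omega, by omega, by omega⟩

lemma RMM_rel_step (k₁ k₂ k₃ k₄ : ℝ)
    (hk₁ : 0 < k₁) (hk₂ : 0 < k₂) (hk₃ : 0 < k₃) (hk₄ : 0 < k₄)
    (N M : ℕ) (i : Fin 4) (t : ℝ) (ht : 0 < t) (u v : ℤ × ℤ)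
    (hu : u ∈ RMMState N M) (hv : v ∈ RMMState N M) (h : RMMRel u v) :
    RMMRel (RMMupdate k₁ k₂ k₃ k₄ N M i t u) (RMMupdate k₁ k₂ k₃ k₄ N M i t v) := by
  obtain ⟨hu1, hu2, hu3, hu4⟩ := hu
  obtain ⟨hv1, hv2, hv3, hv4⟩ := hv
  obtain ⟨hA, hB⟩ := h
  have hu4' : (u.1 : ℝ) + u.2 ≤ N := by exact_mod_cast hu4
  have hv2' : (v.1 : ℝ) ≤ M := by exact_mod_cast hv2
  have hv3' : (0 : ℝ) ≤ v.2 := by exact_mod_cast hv3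
  fin_cases i <;>
    simp only [RMMupdate, RMMrate, RMMdisp] <;>
    split_ifs with h1 <;> simp only [h1, if_true, if_false] <;>
    split_ifs with h2 <;> simp only [h2, if_true, if_false] <;>
    simp only [RMMRel, Prod.fst_add, Prod.snd_add] <;>
    try (constructor <;> omega)
  · -- reaction 1: u moves, v stays
    have key : u.1 + u.2 < v.1 + v.2 := by
      by_contra hcon
      push_neg at hcon
      have hsum : u.1 + u.2 = v.1 + v.2 := le_antisymm hB hcon
      have hc : v.1 ≤ u.1 := by omega
      have hsum' : (u.1 : ℝ) + u.2 = (v.1 : ℝ) + v.2 := by exact_mod_cast hsum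
      have hc' : (v.1 : ℝ) ≤ u.1 := by exact_mod_cast hc
      have hc2' : (u.1 : ℝ) ≤ M := by exact_mod_cast hu2
      apply h2
      have e : (N:ℝ) - v.1 - v.2 = (N:ℝ) - u.1 - u.2 := by linarith
      calc t ≤ k₁ * ((N:ℝ) - u.1 - u.2) * ((M:ℝ) - u.1) := h1
        _ ≤ k₁ * ((N:ℝ) - u.1 - u.2) * ((M:ℝ) - v.1) := by
            apply mul_le_mul_of_nonneg_left (by linarith)
            apply mul_nonneg hk₁.le (by linarith)
        _ = k₁ * ((N:ℝ) - v.1 - v.2) * ((M:ℝ) - v.1) := by rw [e]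
    constructor <;> omega
  · -- reaction 2: v moves, u stays
    have key : u.1 + u.2 < v.1 + v.2 := by
      by_contra hcon
      push_neg at hcon
      have hsum : u.1 + u.2 = v.1 + v.2 := le_antisymm hB hcon
      have hc : v.1 ≤ u.1 := by omega
      have hc' : (v.1 : ℝ) ≤ u.1 := by exact_mod_cast hc
      apply h1
      nlinarith
    constructor <;> omega
  · -- reaction 3: u moves, v stays
    have key : u.2 < v.2 := by
      by_contra hcon
      push_neg at hcon
      have hp : u.2 = v.2 := le_antisymm hA hcon
      have hc : u.1 ≤ v.1 := by omega
      have hc' : (u.1 : ℝ) ≤ v.1 := by exact_mod_cast hc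
      apply h2
      nlinarith
    constructor <;> omega
  · -- reaction 4: v moves, u stays
    have key : u.2 < v.2 := by
      by_contra hcon
      push_neg at hcon
      have hp : u.2 = v.2 := le_antisymm hA hcon
      have hc : u.1 ≤ v.1 := by omega
      have hp' : (u.2 : ℝ) = v.2 := by exact_mod_cast hp
      have hc' : (u.1 : ℝ) ≤ v.1 := by exact_mod_cast hc
      apply h1
      calc t ≤ k₄ * (v.2:ℝ) * ((M:ℝ) - v.1) := ‹k₄ * (v.2:ℝ) * ((M:ℝ) - v.1) ≥ t›
        _ ≤ k₄ * (v.2:ℝ) * ((M:ℝ) - u.1) := by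
            apply mul_le_mul_of_nonneg_left (by linarith)
            exact mul_nonneg hk₄.le hv3'
        _ = k₄ * (u.2:ℝ) * ((M:ℝ) - u.1) := by rw [hp']
    constructor <;> omega

lemma RMM_flow_rel (k₁ k₂ k₃ k₄ : ℝ)
    (hk₁ : 0 < k₁) (hk₂ : 0 < k₂) (hk₃ : 0 < k₃) (hk₄ : 0 < k₄)
    (N M : ℕ) :
    ∀ (L : List (Fin 4 × ℝ)), (∀ q ∈ L, 0 < q.2) → ∀ u v : ℤ × ℤ,
      u ∈ RMMState N M → v ∈ RMMState N M → RMMRel u v →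
      RMMRel (RMMflow k₁ k₂ k₃ k₄ N M L u) (RMMflow k₁ k₂ k₃ k₄ N M L v) := by
  intro L
  induction L with
  | nil => intro _ u v _ _ h; exact h
  | cons q L ih =>
    intro hL u v hu hv h
    have htq : 0 < q.2 := hL q (List.mem_cons_self)
    have hL' : ∀ r ∈ L, 0 < r.2 := fun r hr => hL r (List.mem_cons_of_mem q hr)
    simp only [RMMflow, List.foldl_cons]
    exact ih hL' _ _
      (RMM_mem_step k₁ k₂ k₃ k₄ hk₁ hk₂ hk₃ hk₄ N M q.1 q.2 htq u hu)
      (RMM_mem_step k₁ k₂ k₃ k₄ hk₁ hk₂ hk₃ hk₄ N M q.1 q.2 htq v hv)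
      (RMM_rel_step k₁ k₂ k₃ k₄ hk₁ hk₂ hk₃ hk₄ N M q.1 q.2 htq u v hu hv h)


theorem RMM_coupling (k₁ k₂ k₃ k₄ : ℝ)
    (hk₁ : 0 < k₁) (hk₂ : 0 < k₂) (hk₃ : 0 < k₃) (hk₄ : 0 < k₄)
    (N M : ℕ) (hM : 1 ≤ M) (hMN : M ≤ N)
    (L : List (Fin 4 × ℝ)) (hL : ∀ q ∈ L, 0 < q.2)
    (z : ℤ × ℤ)
    (h₀ : RMMflow k₁ k₂ k₃ k₄ N M L (0, 0) = z)
    (hN : RMMflow k₁ k₂ k₃ k₄ N M L (0, (N : ℤ)) = z)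
    (y : ℤ × ℤ) (hy : y ∈ RMMState N M) :
    RMMflow k₁ k₂ k₃ k₄ N M L y = z := by
  obtain ⟨hy1, hy2, hy3, hy4⟩ := hy
  have h00 : ((0, 0) : ℤ × ℤ) ∈ RMMState N M := by
    refine ⟨le_refl 0, ?_, le_refl 0, ?_⟩ <;> simp
  have h0N : ((0, (N : ℤ)) : ℤ × ℤ) ∈ RMMState N M := by
    refine ⟨le_refl 0, ?_, ?_, ?_⟩ <;> simp [Int.ofNat_nonneg]
  have r1 : RMMRel (RMMflow k₁ k₂ k₃ k₄ N M L (0, 0)) (RMMflow k₁ k₂ k₃ k₄ N M L y) :=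
    RMM_flow_rel k₁ k₂ k₃ k₄ hk₁ hk₂ hk₃ hk₄ N M L hL _ y h00 ⟨hy1, hy2, hy3, hy4⟩
      ⟨hy3, by simpa using add_nonneg hy1 hy3⟩
  have r2 : RMMRel (RMMflow k₁ k₂ k₃ k₄ N M L y) (RMMflow k₁ k₂ k₃ k₄ N M L (0, (N : ℤ))) :=
    RMM_flow_rel k₁ k₂ k₃ k₄ hk₁ hk₂ hk₃ hk₄ N M L hL y _ ⟨hy1, hy2, hy3, hy4⟩ h0N
      ⟨by omega, by simpa using hy4⟩
  rw [h₀] at r1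
  rw [hN] at r2
  obtain ⟨a1, a2⟩ := r1
  obtain ⟨b1, b2⟩ := r2
  have e2 : (RMMflow k₁ k₂ k₃ k₄ N M L y).2 = z.2 := le_antisymm b1 a1
  have e1 : (RMMflow k₁ k₂ k₃ k₄ N M L y).1 = z.1 := by omega
  exact Prod.ext e1 e2
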